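/- Let a_1, ..., a_n be positive reals and let N(λ) denote the number of n-tuples (k_1, ..., k_n) of nonnegative integers with Σ_{i=1}^n a_i(2k_i + 1) ≤ λ. Then N(λ)/λ^n → 1/(2^n · n! · a_1·...·a_n) as λ → ∞. -/
import Mathlib

open Filter Finset

/-- MVT-style bounds: for `0 ≤ x ≤ y`,
`(n+1) x^n (y-x) ≤ y^(n+1) - x^(n+1) ≤ (n+1) y^n (y-x)`. -/
lemma pow_sub_pow_bounds (n : ℕ) {x y : ℝ} (hx : 0 ≤ x) (hxy : x ≤ y) :
    ((n : ℝ) + 1) * x ^ n * (y - x) ≤ y ^ (n + 1) - x ^ (n + 1) ∧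
    y ^ (n + 1) - x ^ (n + 1) ≤ ((n : ℝ) + 1) * y ^ n * (y - x) := by
  have hy : 0 ≤ y := hx.trans hxy
  have key := geom_sum₂_mul y x (n + 1)
  have hterm : ∀ i ∈ Finset.range (n + 1),
      x ^ n ≤ y ^ i * x ^ (n + 1 - 1 - i) ∧ y ^ i * x ^ (n + 1 - 1 - i) ≤ y ^ n := by
    intro i hi
    rw [Finset.mem_range, Nat.lt_succ_iff] at hi
    have h1 : n + 1 - 1 - i = n - i := by omega
    have h2 : i + (n - i) = n := by omega
    rw [h1]
    constructor
    · calc x ^ n = x ^ i * x ^ (n - i) := by rw [← pow_add, h2]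
        _ ≤ y ^ i * x ^ (n - i) :=
          mul_le_mul_of_nonneg_right (pow_le_pow_left₀ hx hxy i) (pow_nonneg hx _)
    · calc y ^ i * x ^ (n - i) ≤ y ^ i * y ^ (n - i) :=
          mul_le_mul_of_nonneg_left (pow_le_pow_left₀ hx hxy _) (pow_nonneg hy _)
        _ = y ^ n := by rw [← pow_add, h2]
  have hsum_lo : ((n : ℝ) + 1) * x ^ n ≤ ∑ i ∈ Finset.range (n + 1), y ^ i * x ^ (n + 1 - 1 - i) := by
    calc ((n : ℝ) + 1) * x ^ n = ∑ _i ∈ Finset.range (n + 1), x ^ n := by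
          rw [Finset.sum_const, Finset.card_range]; push_cast; ring
      _ ≤ _ := Finset.sum_le_sum fun i hi => (hterm i hi).1
  have hsum_hi : ∑ i ∈ Finset.range (n + 1), y ^ i * x ^ (n + 1 - 1 - i) ≤ ((n : ℝ) + 1) * y ^ n := by
    calc (∑ i ∈ Finset.range (n + 1), y ^ i * x ^ (n + 1 - 1 - i))
        ≤ ∑ _i ∈ Finset.range (n + 1), y ^ n := Finset.sum_le_sum fun i hi => (hterm i hi).2
      _ = ((n : ℝ) + 1) * y ^ n := by rw [Finset.sum_const, Finset.card_range]; push_cast; ring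
  have hyx : 0 ≤ y - x := by linarith
  constructor
  · rw [← key]
    exact mul_le_mul_of_nonneg_right hsum_lo hyx
  · rw [← key]
    exact mul_le_mul_of_nonneg_right hsum_hi hyx

lemma tele_lower (n : ℕ) {b t : ℝ} (hb : 0 < b) (ht : 0 ≤ t) :
    t ^ (n + 1) ≤ ((n : ℝ) + 1) * b * ∑ j ∈ Finset.range (⌊t / b⌋₊ + 1), (t - b * j) ^ n := by
  set J := ⌊t / b⌋₊ with hJdef
  have hmem : ∀ j : ℕ, j ≤ J → b * j ≤ t := by
    intro j hj
    have h1 : (j : ℝ) ≤ t / b := (Nat.le_floor_iff (by positivity)).mp hj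
    calc b * j ≤ b * (t / b) := mul_le_mul_of_nonneg_left h1 hb.le
      _ = t := by field_simp
  set u : ℕ → ℝ := fun j => if j ≤ J then t - b * j else 0 with hu
  have hu0 : u 0 = t := by simp [hu]
  have huJ : u (J + 1) = 0 := by simp [hu]
  have tel : ∑ j ∈ Finset.range (J + 1), (u j ^ (n + 1) - u (j + 1) ^ (n + 1)) = t ^ (n + 1) := by
    rw [Finset.sum_range_sub' (fun j => u j ^ (n + 1)), hu0, huJ]
    simp
  rw [← tel, Finset.mul_sum]
  apply Finset.sum_le_sum
  intro j hj
  rw [Finset.mem_range, Nat.lt_succ_iff] at hj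
  have h1 : u j = t - b * j := if_pos hj
  have hjt : b * j ≤ t := hmem j hj
  have h2 : 0 ≤ u (j + 1) := by
    by_cases h : j + 1 ≤ J
    · have := hmem (j + 1) h
      push_cast at this
      simp only [hu, if_pos h]
      push_cast
      linarith
    · simp only [hu, if_neg h, le_refl]
  have h3 : u (j + 1) ≤ u j := by
    by_cases h : j + 1 ≤ J
    · simp only [hu]
      rw [if_pos h, if_pos hj]
      push_cast
      nlinarith [hb]
    · simp only [hu]
      rw [if_neg h, if_pos hj]
      linarith
  have h4 : u j - u (j + 1) ≤ b := by
    by_cases h : j + 1 ≤ J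
    · simp only [hu]
      rw [if_pos h, if_pos hj]
      push_cast
      ring_nf
      nlinarith [hb]
    · have hjJ : j = J := by omega
      have hlt : t / b < (J : ℝ) + 1 := by
        rw [hJdef]
        exact_mod_cast Nat.lt_floor_add_one (t / b)
      have : t < b * (J + 1) := by
        have := mul_lt_mul_of_pos_left hlt hb
        rw [mul_div_cancel₀ _ hb.ne'] at this
        linarith
      simp only [hu]
      rw [if_neg h, if_pos hj, hjJ]
      push_cast
      linarith
  have hun : 0 ≤ u j := h2.trans h3
  calc u j ^ (n + 1) - u (j + 1) ^ (n + 1)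
      ≤ ((n : ℝ) + 1) * u j ^ n * (u j - u (j + 1)) := (pow_sub_pow_bounds n h2 h3).2
    _ ≤ ((n : ℝ) + 1) * u j ^ n * b := by
        apply mul_le_mul_of_nonneg_left h4
        positivity
    _ = ((n : ℝ) + 1) * b * (t - b * j) ^ n := by rw [h1]; ring

lemma tele_upper (n : ℕ) {b t A : ℝ} (hb : 0 < b) (ht : 0 ≤ t) (hA : 0 ≤ A) :
    ((n : ℝ) + 1) * b * ∑ j ∈ Finset.range (⌊t / b⌋₊ + 1), (t + A - b * j) ^ n
      ≤ (t + A + b) ^ (n + 1) := by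
  set J := ⌊t / b⌋₊ with hJdef
  have hmem : ∀ j : ℕ, j ≤ J → b * j ≤ t := by
    intro j hj
    have h1 : (j : ℝ) ≤ t / b := (Nat.le_floor_iff (by positivity)).mp hj
    calc b * j ≤ b * (t / b) := mul_le_mul_of_nonneg_left h1 hb.le
      _ = t := by field_simp
  set v : ℕ → ℝ := fun j => t + A + b - b * j with hv
  have key : ∀ j ∈ Finset.range (J + 1),
      ((n : ℝ) + 1) * b * (t + A - b * j) ^ n ≤ v j ^ (n + 1) - v (j + 1) ^ (n + 1) := by
    intro j hj
    rw [Finset.mem_range, Nat.lt_succ_iff] at hj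
    have hvj1 : v (j + 1) = t + A - b * j := by simp only [hv]; push_cast; ring
    have h2 : 0 ≤ v (j + 1) := by
      rw [hvj1]
      have := hmem j hj
      linarith
    have hd : v j - v (j + 1) = b := by simp only [hv]; push_cast; ring
    have h3 : v (j + 1) ≤ v j := by linarith [hd, hb]
    calc ((n : ℝ) + 1) * b * (t + A - b * j) ^ n
        = ((n : ℝ) + 1) * v (j + 1) ^ n * (v j - v (j + 1)) := by
          rw [hvj1]
          have hvj : v j = t + A + b - b * j := rfl
          rw [hvj]
          push_cast
          ring
      _ ≤ v j ^ (n + 1) - v (j + 1) ^ (n + 1) := (pow_sub_pow_bounds n h2 h3).1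
  have h2J : 0 ≤ v (J + 1) := by
    have := hmem J le_rfl
    simp only [hv]
    push_cast
    linarith
  calc ((n : ℝ) + 1) * b * ∑ j ∈ Finset.range (J + 1), (t + A - b * j) ^ n
      = ∑ j ∈ Finset.range (J + 1), ((n : ℝ) + 1) * b * (t + A - b * j) ^ n := Finset.mul_sum _ _ _
    _ ≤ ∑ j ∈ Finset.range (J + 1), (v j ^ (n + 1) - v (j + 1) ^ (n + 1)) :=
        Finset.sum_le_sum key
    _ = v 0 ^ (n + 1) - v (J + 1) ^ (n + 1) := Finset.sum_range_sub' (fun j => v j ^ (n + 1)) _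
    _ ≤ v 0 ^ (n + 1) := by
        have : 0 ≤ v (J + 1) ^ (n + 1) := pow_nonneg h2J _
        linarith
    _ = (t + A + b) ^ (n + 1) := by simp [hv]

lemma finite_cnt (n : ℕ) (b : Fin n → ℝ) (hb : ∀ i, 0 < b i) (t : ℝ) :
    {k : Fin n → ℕ | ∑ i, b i * (k i : ℝ) ≤ t}.Finite := by
  apply Set.Finite.subset (Set.Finite.pi (fun i : Fin n => Set.finite_Iic (⌊t / b i⌋₊)))
  intro k hk
  simp only [Set.mem_setOf_eq] at hk
  intro i _
  simp only [Set.mem_Iic]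
  have h1 : b i * (k i : ℝ) ≤ t := by
    have h2 : ∀ j ∈ Finset.univ, (0 : ℝ) ≤ b j * (k j : ℝ) :=
      fun j _ => mul_nonneg (hb j).le (Nat.cast_nonneg _)
    have := Finset.single_le_sum h2 (Finset.mem_univ i)
    linarith
  exact Nat.le_floor ((le_div_iff₀ (hb i)).mpr (by linarith [h1]))

/-- The sandwich bound by induction on the dimension. -/
lemma sandwich : ∀ (n : ℕ) (b : Fin n → ℝ), (∀ i, 0 < b i) → ∀ t : ℝ, 0 ≤ t →
    t ^ n ≤ (n.factorial : ℝ) * (∏ i, b i) *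
        (Nat.card {k : Fin n → ℕ // ∑ i, b i * (k i : ℝ) ≤ t} : ℝ) ∧
    (n.factorial : ℝ) * (∏ i, b i) *
        (Nat.card {k : Fin n → ℕ // ∑ i, b i * (k i : ℝ) ≤ t} : ℝ) ≤ (t + ∑ i, b i) ^ n := by
  intro n
  induction n with
  | zero =>
    intro b hb t ht
    have e : {k : Fin 0 → ℕ // ∑ i, b i * (k i : ℝ) ≤ t} ≃ (Fin 0 → ℕ) :=
      Equiv.subtypeUnivEquiv (fun k => by simp [ht])
    rw [Nat.card_congr e]
    simp [ht]
  | succ n ih =>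
    intro b hb t ht
    set J := ⌊t / b 0⌋₊ with hJdef
    have hb0 : 0 < b 0 := hb 0
    set c : Fin n → ℝ := fun i => b i.succ with hc
    have hc_pos : ∀ i, 0 < c i := fun i => hb i.succ
    have hmem : ∀ j : ℕ, j ≤ J → b 0 * j ≤ t := by
      intro j hj
      have h1 : (j : ℝ) ≤ t / b 0 := (Nat.le_floor_iff (div_nonneg ht hb0.le)).mp hj
      calc b 0 * j ≤ b 0 * (t / b 0) := mul_le_mul_of_nonneg_left h1 hb0.le
        _ = t := by field_simp
    -- decompose the count
    have hcard : (Nat.card {k : Fin (n + 1) → ℕ // ∑ i, b i * (k i : ℝ) ≤ t} : ℝ)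
        = ∑ j ∈ Finset.range (J + 1),
            (Nat.card {k : Fin n → ℕ // ∑ i, c i * (k i : ℝ) ≤ t - b 0 * j} : ℝ) := by
      have e : {k : Fin (n + 1) → ℕ // ∑ i, b i * (k i : ℝ) ≤ t} ≃
          (j : Fin (J + 1)) × {k : Fin n → ℕ // ∑ i, c i * (k i : ℝ) ≤ t - b 0 * (j : ℕ)} := by
        refine ⟨fun k => ⟨⟨k.1 0, ?_⟩, ⟨fun i => k.1 i.succ, ?_⟩⟩,
            fun p => ⟨Fin.cons p.1.1 p.2.1, ?_⟩, fun k => Subtype.ext (Fin.cons_self_tail k.1),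
            fun p => rfl⟩
        · have hk := k.2
          rw [Fin.sum_univ_succ] at hk
          have htail : 0 ≤ ∑ i : Fin n, b i.succ * ((k.1 i.succ : ℕ) : ℝ) := by
            apply Finset.sum_nonneg
            intro i _
            exact mul_nonneg (hb _).le (Nat.cast_nonneg _)
          have : b 0 * ((k.1 0 : ℕ) : ℝ) ≤ t := by linarith
          have h4 : ((k.1 0 : ℕ) : ℝ) ≤ t / b 0 := (le_div_iff₀ hb0).mpr (by linarith)
          exact Nat.lt_succ_of_le (Nat.le_floor h4)
        · have hk := k.2
          rw [Fin.sum_univ_succ] at hk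
          simp only [hc]
          linarith
        · obtain ⟨⟨j, hj⟩, k, hk⟩ := p
          rw [Fin.sum_univ_succ]
          simp only [Fin.cons_zero, Fin.cons_succ]
          simp only [hc] at hk
          linarith
      rw [Nat.card_congr e]
      haveI : ∀ j : Fin (J + 1),
          Finite {k : Fin n → ℕ // ∑ i, c i * (k i : ℝ) ≤ t - b 0 * (j : ℕ)} := by
        intro j
        exact (finite_cnt n c hc_pos (t - b 0 * (j : ℕ))).to_subtype
      haveI : ∀ j : Fin (J + 1),
          Fintype {k : Fin n → ℕ // ∑ i, c i * (k i : ℝ) ≤ t - b 0 * (j : ℕ)} :=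
        fun j => Fintype.ofFinite _
      rw [Nat.card_eq_fintype_card, Fintype.card_sigma]
      push_cast
      rw [← Fin.sum_univ_eq_sum_range (fun j =>
        (Nat.card {k : Fin n → ℕ // ∑ i, c i * (k i : ℝ) ≤ t - b 0 * (j : ℕ)} : ℝ)) (J + 1)]
      congr 1
      funext j
      rw [Nat.card_eq_fintype_card]
    have hprod : (∏ i, b i) = b 0 * ∏ i, c i := Fin.prod_univ_succ b
    have hsum : (∑ i, b i) = b 0 + ∑ i, c i := Fin.sum_univ_succ b
    have hcpos : (0 : ℝ) < ∏ i, c i := Finset.prod_pos fun i _ => hc_pos i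
    have hfac : ((n + 1).factorial : ℝ) = ((n : ℝ) + 1) * n.factorial := by
      rw [Nat.factorial_succ]
      push_cast
      ring
    have hAc : 0 ≤ ∑ i, c i := Finset.sum_nonneg fun i _ => (hc_pos i).le
    constructor
    · -- lower bound
      have h1 := tele_lower n hb0 ht
      have h2 : ∀ j ∈ Finset.range (J + 1), (t - b 0 * j) ^ n ≤ (n.factorial : ℝ) * (∏ i, c i) *
          (Nat.card {k : Fin n → ℕ // ∑ i, c i * (k i : ℝ) ≤ t - b 0 * j} : ℝ) := by
        intro j hj
        rw [Finset.mem_range, Nat.lt_succ_iff] at hj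
        exact (ih c hc_pos (t - b 0 * j) (by linarith [hmem j hj])).1
      calc t ^ (n + 1) ≤ ((n : ℝ) + 1) * b 0 * ∑ j ∈ Finset.range (J + 1), (t - b 0 * j) ^ n :=
            h1
        _ ≤ ((n : ℝ) + 1) * b 0 * ∑ j ∈ Finset.range (J + 1), ((n.factorial : ℝ) * (∏ i, c i) *
            (Nat.card {k : Fin n → ℕ // ∑ i, c i * (k i : ℝ) ≤ t - b 0 * j} : ℝ)) := by
            apply mul_le_mul_of_nonneg_left (Finset.sum_le_sum h2)
            positivity
        _ = ((n + 1).factorial : ℝ) * (∏ i, b i) *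
            (Nat.card {k : Fin (n + 1) → ℕ // ∑ i, b i * (k i : ℝ) ≤ t} : ℝ) := by
            rw [hcard, hprod, hfac, ← Finset.mul_sum]
            ring
    · -- upper bound
      have h2 : ∀ j ∈ Finset.range (J + 1), (n.factorial : ℝ) * (∏ i, c i) *
          (Nat.card {k : Fin n → ℕ // ∑ i, c i * (k i : ℝ) ≤ t - b 0 * j} : ℝ)
            ≤ (t + (∑ i, c i) - b 0 * j) ^ n := by
        intro j hj
        rw [Finset.mem_range, Nat.lt_succ_iff] at hj
        have := (ih c hc_pos (t - b 0 * j) (by linarith [hmem j hj])).2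
        have harr : t - b 0 * j + ∑ i, c i = t + (∑ i, c i) - b 0 * j := by ring
        rw [harr] at this
        exact this
      have h3 := tele_upper n (A := ∑ i, c i) hb0 ht hAc
      calc ((n + 1).factorial : ℝ) * (∏ i, b i) *
            (Nat.card {k : Fin (n + 1) → ℕ // ∑ i, b i * (k i : ℝ) ≤ t} : ℝ)
          = ((n : ℝ) + 1) * b 0 * ∑ j ∈ Finset.range (J + 1), ((n.factorial : ℝ) * (∏ i, c i) *
            (Nat.card {k : Fin n → ℕ // ∑ i, c i * (k i : ℝ) ≤ t - b 0 * j} : ℝ)) := by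
            rw [hcard, hprod, hfac, ← Finset.mul_sum]
            ring
        _ ≤ ((n : ℝ) + 1) * b 0 * ∑ j ∈ Finset.range (J + 1), (t + (∑ i, c i) - b 0 * j) ^ n := by
            apply mul_le_mul_of_nonneg_left (Finset.sum_le_sum h2)
            positivity
        _ ≤ (t + (∑ i, c i) + b 0) ^ (n + 1) := h3
        _ = (t + ∑ i, b i) ^ (n + 1) := by rw [hsum]; ring_nf

theorem stmt_8 (n : ℕ) (hn : 1 ≤ n) (a : Fin n → ℝ) (ha : ∀ i, 0 < a i) :
    Tendsto
      (fun lam : ℝ =>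
        (Nat.card {k : Fin n → ℕ // ∑ i, a i * (2 * (k i : ℝ) + 1) ≤ lam} : ℝ) / lam ^ n)
      atTop
      (nhds (1 / (2 ^ n * (Nat.factorial n : ℝ) * ∏ i, a i))) := by
  set A : ℝ := ∑ i, a i with hA
  have hApos : 0 < A := Finset.sum_pos (fun i _ => ha i) (Finset.univ_nonempty_iff.mpr
    (Fin.pos_iff_nonempty.mp (by omega)))
  set b : Fin n → ℝ := fun i => 2 * a i with hb
  have hbpos : ∀ i, 0 < b i := fun i => by have := ha i; simp only [hb]; linarith
  set Q : ℝ := (n.factorial : ℝ) * ∏ i, b i with hQ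
  have hQ' : Q = 2 ^ n * (n.factorial : ℝ) * ∏ i, a i := by
    simp only [hQ, hb, Finset.prod_mul_distrib, Finset.prod_const, Finset.card_univ,
      Fintype.card_fin]
    ring
  have hQpos : 0 < Q := by
    rw [hQ']
    have : (0 : ℝ) < ∏ i, a i := Finset.prod_pos fun i _ => ha i
    positivity
  have hsumb : ∑ i, b i = 2 * A := by
    simp only [hb, hA, ← Finset.mul_sum]
  -- rewrite the counted set
  have hset : ∀ lam : ℝ, Nat.card {k : Fin n → ℕ // ∑ i, a i * (2 * (k i : ℝ) + 1) ≤ lam}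
      = Nat.card {k : Fin n → ℕ // ∑ i, b i * (k i : ℝ) ≤ lam - A} := by
    intro lam
    apply Nat.card_congr
    apply Equiv.subtypeEquivRight
    intro k
    have hsplit : ∑ i, a i * (2 * (k i : ℝ) + 1) = (∑ i, b i * (k i : ℝ)) + A := by
      rw [hA, ← Finset.sum_add_distrib]
      apply Finset.sum_congr rfl
      intro i _
      simp only [hb]
      ring
    rw [hsplit]
    constructor <;> intro h <;> linarith
  -- squeeze
  have hlow : Tendsto (fun lam : ℝ => ((lam - A) / lam) ^ n / Q) atTop
      (nhds (1 / (2 ^ n * (Nat.factorial n : ℝ) * ∏ i, a i))) := by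
    rw [← hQ']
    have h1 : Tendsto (fun lam : ℝ => (lam - A) / lam) atTop (nhds 1) := by
      have : (fun lam : ℝ => (lam - A) / lam) =ᶠ[atTop] fun lam => 1 - A * lam⁻¹ := by
        filter_upwards [eventually_ne_atTop 0] with lam hlam
        field_simp
      rw [tendsto_congr' this]
      have := tendsto_inv_atTop_zero (𝕜 := ℝ)
      have h2 : Tendsto (fun lam : ℝ => 1 - A * lam⁻¹) atTop (nhds (1 - A * 0)) :=
        tendsto_const_nhds.sub (tendsto_const_nhds.mul this)
      simpa using h2
    have h2 : Tendsto (fun lam : ℝ => ((lam - A) / lam) ^ n) atTop (nhds 1) := by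
      have := h1.pow n
      simpa using this
    have := h2.div_const Q
    simpa using this
  have hhigh : Tendsto (fun lam : ℝ => ((lam + A) / lam) ^ n / Q) atTop
      (nhds (1 / (2 ^ n * (Nat.factorial n : ℝ) * ∏ i, a i))) := by
    rw [← hQ']
    have h1 : Tendsto (fun lam : ℝ => (lam + A) / lam) atTop (nhds 1) := by
      have : (fun lam : ℝ => (lam + A) / lam) =ᶠ[atTop] fun lam => 1 + A * lam⁻¹ := by
        filter_upwards [eventually_ne_atTop 0] with lam hlam
        field_simp
      rw [tendsto_congr' this]
      have := tendsto_inv_atTop_zero (𝕜 := ℝ)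
      have h2 : Tendsto (fun lam : ℝ => 1 + A * lam⁻¹) atTop (nhds (1 + A * 0)) :=
        tendsto_const_nhds.add (tendsto_const_nhds.mul this)
      simpa using h2
    have h2 : Tendsto (fun lam : ℝ => ((lam + A) / lam) ^ n) atTop (nhds 1) := by
      have := h1.pow n
      simpa using this
    have := h2.div_const Q
    simpa using this
  apply tendsto_of_tendsto_of_tendsto_of_le_of_le' hlow hhigh
  · -- lower eventual bound
    filter_upwards [eventually_ge_atTop A, eventually_gt_atTop 0] with lam hlamA hlam0
    rw [hset lam]
    set N : ℝ := (Nat.card {k : Fin n → ℕ // ∑ i, b i * (k i : ℝ) ≤ lam - A} : ℝ) with hN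
    have hsand := (sandwich n b hbpos (lam - A) (by linarith)).1
    have hNnn : 0 ≤ N := Nat.cast_nonneg _
    have hlp : (0 : ℝ) < lam ^ n := by positivity
    calc ((lam - A) / lam) ^ n / Q = (lam - A) ^ n / (Q * lam ^ n) := by
          rw [div_pow, div_div, mul_comm]
      _ ≤ (Q * N) / (Q * lam ^ n) := by
          gcongr
      _ = N / lam ^ n := by
          rw [mul_div_mul_left _ _ hQpos.ne']
  · -- upper eventual bound
    filter_upwards [eventually_ge_atTop A, eventually_gt_atTop 0] with lam hlamA hlam0
    rw [hset lam]
    set N : ℝ := (Nat.card {k : Fin n → ℕ // ∑ i, b i * (k i : ℝ) ≤ lam - A} : ℝ) with hN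
    have hsand := (sandwich n b hbpos (lam - A) (by linarith)).2
    have hlp : (0 : ℝ) < lam ^ n := by positivity
    rw [hsumb] at hsand
    calc N / lam ^ n = (Q * N) / (Q * lam ^ n) := by rw [mul_div_mul_left _ _ hQpos.ne']
      _ ≤ (lam + A) ^ n / (Q * lam ^ n) := by
          gcongr
          have heq : lam - A + 2 * A = lam + A := by ring
          rw [heq] at hsand
          rw [hQ]
          exact hsand
      _ = ((lam + A) / lam) ^ n / Q := by rw [div_pow, div_div, mul_comm]
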